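/- Let φ : ℍ → ℍ be H-differentiable at z⁰ ∈ ℍ with H-derivative d, and suppose φ(z) ≠ 0 for all z in some neighborhood of z⁰. Then the function z ↦ (φ(z))⁻¹ is H-differentiable at z⁰ with H-derivative −(φ(z⁰))⁻¹ · d · (φ(z⁰))⁻¹. -/

import Mathlib

open scoped Quaternion
open Filter Topology

/-- A function `f : ℍ → ℍ` is H-differentiable at `z₀` with H-derivative `d` if there exist
sequences of quaternions `A, B` with `∑ ‖A k‖ * ‖B k‖ < ∞` such that
`f (z₀ + h) - f z₀ = ∑' k, A k * h * B k + ω h` with `‖ω h‖ / ‖h‖ → 0` as `h → 0`,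
and `d = ∑' k, A k * B k`. -/
def HDiffAt (f : ℍ[ℝ] → ℍ[ℝ]) (z₀ d : ℍ[ℝ]) : Prop :=
  ∃ A B : ℕ → ℍ[ℝ],
    (Summable fun k => ‖A k‖ * ‖B k‖) ∧
    Filter.Tendsto
      (fun h : ℍ[ℝ] => ‖f (z₀ + h) - f z₀ - ∑' k, A k * h * B k‖ / ‖h‖)
      (𝓝[≠] (0 : ℍ[ℝ])) (𝓝 0) ∧
    d = ∑' k, A k * B k

/-- H-derivative of the reciprocal of a nonvanishing H-differentiable function. -/
theorem hDiffAt_inv_comp (φ : ℍ[ℝ] → ℍ[ℝ]) (z₀ d : ℍ[ℝ]) (hφ : HDiffAt φ z₀ d)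
    (hne : ∀ᶠ z in 𝓝 z₀, φ z ≠ 0) :
    HDiffAt (fun z => (φ z)⁻¹) z₀ (-((φ z₀)⁻¹ * d * (φ z₀)⁻¹)) := by
  obtain ⟨A, B, hAB, hlim, hd⟩ := hφ
  set p := φ z₀ with hp
  have hp0 : p ≠ 0 := hne.self_of_nhds
  set S : ℍ[ℝ] → ℍ[ℝ] := fun h => ∑' k, A k * h * B k with hSdef
  set C : ℝ := ∑' k, ‖A k‖ * ‖B k‖ with hCdef
  set w : ℍ[ℝ] → ℍ[ℝ] := fun h => φ (z₀ + h) - p - S h with hwdef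
  have hT : ∀ h : ℍ[ℝ], (∑' k, (-(p⁻¹ * A k)) * h * (B k * p⁻¹))
      = -(p⁻¹ * S h * p⁻¹) := by
    intro h
    have : ∀ k, (-(p⁻¹ * A k)) * h * (B k * p⁻¹) = -(p⁻¹ * ((A k * h * B k) * p⁻¹)) := by
      intro k; noncomm_ring
    simp only [this]
    rw [tsum_neg, tsum_mul_left, tsum_mul_right, mul_assoc]
  have hS_le : ∀ h : ℍ[ℝ], ‖S h‖ ≤ C * ‖h‖ := by
    intro h
    have heq : (fun k => ‖A k * h * B k‖) = fun k => ‖h‖ * (‖A k‖ * ‖B k‖) := by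
      funext k; rw [norm_mul, norm_mul]; ring
    have hsum : Summable fun k => ‖A k * h * B k‖ := by
      rw [heq]; exact hAB.mul_left _
    calc ‖S h‖ ≤ ∑' k, ‖A k * h * B k‖ := norm_tsum_le_tsum_norm hsum
      _ = ‖h‖ * C := by rw [heq, tsum_mul_left]
      _ = C * ‖h‖ := mul_comm _ _
  have hnorm_h : Tendsto (fun h : ℍ[ℝ] => ‖h‖) (𝓝[≠] (0:ℍ[ℝ])) (𝓝 0) := by
    have := (continuous_norm (E := ℍ[ℝ])).tendsto (0:ℍ[ℝ])
    simpa using this.mono_left nhdsWithin_le_nhds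
  have hw0 : Tendsto w (𝓝[≠] (0:ℍ[ℝ])) (𝓝 0) := by
    apply squeeze_zero_norm' (a := fun h => (‖w h‖ / ‖h‖) * ‖h‖)
    · filter_upwards [self_mem_nhdsWithin] with h hh
      rw [div_mul_cancel₀]
      exact norm_ne_zero_iff.mpr hh
    · simpa using hlim.mul hnorm_h
  have hS0 : Tendsto S (𝓝[≠] (0:ℍ[ℝ])) (𝓝 0) := by
    apply squeeze_zero_norm' (a := fun h => C * ‖h‖)
    · filter_upwards with h; exact hS_le h
    · simpa using hnorm_h.const_mul C
  have hq : Tendsto (fun h => φ (z₀ + h)) (𝓝[≠] (0:ℍ[ℝ])) (𝓝 p) := by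
    have : (fun h => φ (z₀ + h)) = fun h => p + S h + w h := by
      funext h; simp [hwdef]
    rw [this]
    simpa using ((tendsto_const_nhds.add hS0).add hw0)
  have hqinv : Tendsto (fun h => (φ (z₀ + h))⁻¹) (𝓝[≠] (0:ℍ[ℝ])) (𝓝 p⁻¹) :=
    hq.inv₀ hp0
  have hmap : Tendsto (fun h : ℍ[ℝ] => z₀ + h) (𝓝[≠] (0:ℍ[ℝ])) (𝓝 z₀) := by
    have : Tendsto (fun h : ℍ[ℝ] => z₀ + h) (𝓝 (0:ℍ[ℝ])) (𝓝 z₀) := by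
      simpa using (tendsto_const_nhds (x := z₀)).add (tendsto_id (x := 𝓝 (0:ℍ[ℝ])))
    exact this.mono_left nhdsWithin_le_nhds
  have hne' : ∀ᶠ h in 𝓝[≠] (0:ℍ[ℝ]), φ (z₀ + h) ≠ 0 := hmap.eventually hne
  refine ⟨fun k => -(p⁻¹ * A k), fun k => B k * p⁻¹, ?_, ?_, ?_⟩
  · have : (fun k => ‖-(p⁻¹ * A k)‖ * ‖B k * p⁻¹‖)
        = fun k => (‖p⁻¹‖ * ‖p⁻¹‖) * (‖A k‖ * ‖B k‖) := by
      funext k; rw [norm_neg, norm_mul, norm_mul]; ring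
    rw [this]; exact hAB.mul_left _
  · have hlim' : Tendsto (fun h : ℍ[ℝ] => ‖w h‖ / ‖h‖) (𝓝[≠] (0:ℍ[ℝ])) (𝓝 0) := hlim
    refine squeeze_zero' (g := fun h : ℍ[ℝ] =>
      ‖p⁻¹ - (φ (z₀ + h))⁻¹‖ * C * ‖p⁻¹‖ + ‖(φ (z₀ + h))⁻¹‖ * (‖w h‖ / ‖h‖) * ‖p⁻¹‖)
      ?_ ?_ ?_
    · filter_upwards with h; positivity
    · filter_upwards [self_mem_nhdsWithin, hne'] with h hh hq0
      have hhn : (0:ℝ) < ‖h‖ := norm_pos_iff.mpr hh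
      set q := φ (z₀ + h) with hqd
      have key : q⁻¹ - p⁻¹ - ∑' k, (-(p⁻¹ * A k)) * h * (B k * p⁻¹)
          = (p⁻¹ - q⁻¹) * S h * p⁻¹ - q⁻¹ * w h * p⁻¹ := by
        rw [hT h]
        have hwq : w h = q - p - S h := rfl
        rw [hwq]
        simp only [mul_sub, sub_mul, mul_assoc]
        rw [← mul_assoc q⁻¹ q p⁻¹, inv_mul_cancel₀ hq0, one_mul, mul_inv_cancel₀ hp0, mul_one]
        abel
      rw [key]
      calc ‖(p⁻¹ - q⁻¹) * S h * p⁻¹ - q⁻¹ * w h * p⁻¹‖ / ‖h‖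
          ≤ (‖p⁻¹ - q⁻¹‖ * ‖S h‖ * ‖p⁻¹‖ + ‖q⁻¹‖ * ‖w h‖ * ‖p⁻¹‖) / ‖h‖ := by
            gcongr
            refine (norm_sub_le _ _).trans ?_
            simp only [norm_mul]
            exact le_rfl
        _ = ‖p⁻¹ - q⁻¹‖ * (‖S h‖ / ‖h‖) * ‖p⁻¹‖ + ‖q⁻¹‖ * (‖w h‖ / ‖h‖) * ‖p⁻¹‖ := by
            ring
        _ ≤ ‖p⁻¹ - q⁻¹‖ * C * ‖p⁻¹‖ + ‖q⁻¹‖ * (‖w h‖ / ‖h‖) * ‖p⁻¹‖ := by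
            have hSC : ‖S h‖ / ‖h‖ ≤ C := by
              rw [div_le_iff₀ hhn]; exact hS_le h
            gcongr
    · have h1 : Tendsto (fun h => ‖p⁻¹ - (φ (z₀ + h))⁻¹‖) (𝓝[≠] (0:ℍ[ℝ])) (𝓝 0) := by
        have := (tendsto_const_nhds (x := p⁻¹)).sub hqinv
        simpa using this.norm
      have h2 : Tendsto (fun h => ‖(φ (z₀ + h))⁻¹‖) (𝓝[≠] (0:ℍ[ℝ])) (𝓝 ‖p⁻¹‖) := hqinv.norm
      have h3 : Tendsto (fun h : ℍ[ℝ] =>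
          ‖p⁻¹ - (φ (z₀ + h))⁻¹‖ * C * ‖p⁻¹‖ + ‖(φ (z₀ + h))⁻¹‖ * (‖w h‖ / ‖h‖) * ‖p⁻¹‖)
          (𝓝[≠] (0:ℍ[ℝ])) (𝓝 (0 * C * ‖p⁻¹‖ + ‖p⁻¹‖ * 0 * ‖p⁻¹‖)) :=
        ((h1.mul_const C).mul_const _).add (((h2.mul hlim')).mul_const _)
      have h0 : (0:ℝ) * C * ‖p⁻¹‖ + ‖p⁻¹‖ * 0 * ‖p⁻¹‖ = 0 := by ring
      rwa [h0] at h3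
  · rw [hd]
    have : ∀ k, (-(p⁻¹ * A k)) * (B k * p⁻¹) = -(p⁻¹ * ((A k * B k) * p⁻¹)) := by
      intro k; noncomm_ring
    simp only [this]
    rw [tsum_neg, tsum_mul_left, tsum_mul_right, mul_assoc]
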